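/- arXiv:2108.05629 — 4 statements merged into one kernel-verified Lean document; each statement's English description precedes it below -/
import Mathlib

section
/- Let A be an n×n real matrix (n ≥ 2) and b ∈ ℝⁿ such that the Kalman rank condition holds: span{b, Ab, ..., A^{n-1}b} = ℝⁿ. Define f_n = b and, for 1 ≤ k ≤ n-1, f_k = (A^{n-k} + Σ_{j=1}^{n-k} a_j A^{n-k-j}) b, where a_1, ..., a_n are the coefficients of the characteristic polynomial of A (det(xI - A) = x^n + a_1 x^{n-1} + ... + a_n). Then the matrix P with columns f_1, ..., f_n is invertible. -/
open Matrix Finset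

/-- The Kalman rank condition: span{b, Ab, ..., A^(n-1) b} = ℝⁿ. -/
def Kalman (n : ℕ) (A : Matrix (Fin n) (Fin n) ℝ) (b : Fin n → ℝ) : Prop :=
  Submodule.span ℝ (Set.range fun k : Fin n => (A ^ (k : ℕ)).mulVec b) = ⊤

/-- The coefficients a_j of the characteristic polynomial of A:
det(xI - A) = x^n + a_1 x^(n-1) + ... + a_n, i.e. a_j = coeff (n - j). -/
noncomputable def coeffa (n : ℕ) (A : Matrix (Fin n) (Fin n) ℝ) (j : ℕ) : ℝ :=
  A.charpoly.coeff (n - j)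

/-- p_k(A) = A^(n-k) + Σ_{j=1}^{n-k} a_j A^(n-k-j)  (so p_n(A) = I). -/
noncomputable def pk (n : ℕ) (A : Matrix (Fin n) (Fin n) ℝ) (k : ℕ) :
    Matrix (Fin n) (Fin n) ℝ :=
  A ^ (n - k) + ∑ j ∈ Finset.Icc 1 (n - k), coeffa n A j • A ^ (n - k - j)

/-- The Brunovsky change-of-basis matrix P(b), whose k-th column is f_k = p_k(A) b. -/
noncomputable def PB (n : ℕ) (A : Matrix (Fin n) (Fin n) ℝ) (b : Fin n → ℝ) :
    Matrix (Fin n) (Fin n) ℝ :=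
  Matrix.of fun r c => ((pk n A ((c : ℕ) + 1)).mulVec b) r

/-- The companion matrix of the characteristic polynomial of A: ones on the
superdiagonal, last row (-a_n, ..., -a_1). -/
noncomputable def companion (n : ℕ) (A : Matrix (Fin n) (Fin n) ℝ) :
    Matrix (Fin n) (Fin n) ℝ :=
  Matrix.of fun i j =>
    if (i : ℕ) = n - 1 then -(coeffa n A (n - (j : ℕ)))
    else if (j : ℕ) = (i : ℕ) + 1 then 1 else 0

/-- The last vector of the canonical basis of ℝⁿ. -/
def elast (n : ℕ) : Fin n → ℝ := fun i => if (i : ℕ) = n - 1 then 1 else 0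

/-- Kalman matrix: column c is A^c b. -/
noncomputable def KMat (n : ℕ) (A : Matrix (Fin n) (Fin n) ℝ) (b : Fin n → ℝ) :
    Matrix (Fin n) (Fin n) ℝ :=
  Matrix.of fun r c => ((A ^ (c : ℕ)).mulVec b) r

/-- Anti-triangular coefficient matrix. -/
noncomputable def MMat (n : ℕ) (A : Matrix (Fin n) (Fin n) ℝ) :
    Matrix (Fin n) (Fin n) ℝ :=
  Matrix.of fun m c =>
    if (m : ℕ) = n - 1 - (c : ℕ) then 1
    else if (m : ℕ) < n - 1 - (c : ℕ) then coeffa n A (n - 1 - (c : ℕ) - (m : ℕ)) else 0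

lemma KMat_isUnit (n : ℕ) (A : Matrix (Fin n) (Fin n) ℝ) (b : Fin n → ℝ)
    (hK : Kalman n A b) : IsUnit (KMat n A b) := by
  rw [← Matrix.mulVec_surjective_iff_isUnit]
  rw [show (KMat n A b).mulVec = (KMat n A b).mulVecLin from rfl,
    ← LinearMap.range_eq_top, Matrix.range_mulVecLin]
  have h : Set.range (KMat n A b).col = Set.range fun k : Fin n => (A ^ (k : ℕ)).mulVec b := by
    congr 1
  rw [h]; exact hK

lemma MMat_isUnit (n : ℕ) (A : Matrix (Fin n) (Fin n) ℝ) :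
    IsUnit (MMat n A) := by
  rw [Matrix.isUnit_iff_isUnit_det]
  set σ : Equiv.Perm (Fin n) := Fin.revPerm with hσ
  have hperm := Matrix.det_permute' σ (MMat n A)
  have htri : ((MMat n A).submatrix id σ).BlockTriangular id := by
    intro i j hij
    simp only [Matrix.submatrix_apply, id_eq, MMat, Matrix.of_apply, hσ, Fin.revPerm_apply,
      Fin.val_rev]
    have hj : (j : ℕ) < n := j.isLt
    have hij' : (j : ℕ) < (i : ℕ) := hij
    rw [if_neg (by omega), if_neg (by omega)]
  have hdiag : ((MMat n A).submatrix id σ).det = 1 := by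
    rw [Matrix.det_of_upperTriangular htri]
    apply Finset.prod_eq_one
    intro i _
    simp only [Matrix.submatrix_apply, id_eq, MMat, Matrix.of_apply, hσ, Fin.revPerm_apply,
      Fin.val_rev]
    rw [if_pos (by omega)]
  rw [hdiag] at hperm
  exact IsUnit.of_mul_eq_one _ (by rw [mul_comm]; exact hperm.symm)

lemma PB_eq (n : ℕ) (A : Matrix (Fin n) (Fin n) ℝ) (b : Fin n → ℝ) :
    PB n A b = KMat n A b * MMat n A := by
  ext r c
  rw [Matrix.mul_apply]
  set d : ℕ := n - 1 - (c : ℕ) with hd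
  have hdn : d < n := by have := c.isLt; omega
  -- RHS
  have hRHS : ∑ m : Fin n, KMat n A b r m * MMat n A m c
      = ∑ m ∈ Finset.range n, ((A ^ m).mulVec b) r *
          (if m = d then 1 else if m < d then coeffa n A (d - m) else 0) := by
    rw [Finset.sum_range fun m => _]
    apply Finset.sum_congr rfl
    intro m _
    simp [KMat, MMat, hd]
  rw [hRHS]
  rw [← Finset.sum_subset (Finset.range_subset_range.2 hdn)
      (fun m _ hm => by
        have : d < m := by simp only [Finset.mem_range, not_lt] at hm ⊢; omega
        rw [if_neg (by omega), if_neg (by omega), mul_zero])]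
  rw [Finset.sum_range_succ, if_pos rfl, mul_one]
  have hsum : ∑ m ∈ Finset.range d, ((A ^ m).mulVec b) r *
      (if m = d then 1 else if m < d then coeffa n A (d - m) else 0)
      = ∑ j ∈ Finset.Icc 1 d, coeffa n A j * ((A ^ (d - j)).mulVec b) r := by
    rw [← Finset.Ico_add_one_right_eq_Icc, Finset.sum_Ico_eq_sum_range]
    rw [← Finset.sum_range_reflect
      (fun m => ((A ^ m).mulVec b) r *
        (if m = d then 1 else if m < d then coeffa n A (d - m) else 0)) d]
    apply Finset.sum_congr rfl
    intro i hi
    have hi' : i < d := Finset.mem_range.1 hi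
    rw [if_neg (by omega), if_pos (by omega)]
    have h1 : d - (d - 1 - i) = 1 + i := by omega
    have h2 : d - 1 - i = d - (1 + i) := by omega
    rw [h1, h2, mul_comm]
  rw [hsum]
  -- LHS
  have hdk : n - ((c : ℕ) + 1) = d := by have := c.isLt; omega
  simp only [PB, Matrix.of_apply, pk, hdk, Matrix.add_mulVec, Pi.add_apply]
  have hmul : ((∑ j ∈ Finset.Icc 1 d, coeffa n A j • A ^ (d - j)) *ᵥ b) r
      = ∑ j ∈ Finset.Icc 1 d, coeffa n A j * ((A ^ (d - j)) *ᵥ b) r := by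
    simp only [Matrix.mulVec, dotProduct, Finset.sum_apply, Matrix.sum_apply, Matrix.smul_apply,
      Finset.sum_mul, smul_eq_mul, Finset.mul_sum, mul_assoc]
    rw [Finset.sum_comm]
  rw [hmul, add_comm]

theorem brunovsky_P_invertible (n : ℕ) (hn : 2 ≤ n)
    (A : Matrix (Fin n) (Fin n) ℝ) (b : Fin n → ℝ) (hK : Kalman n A b) :
    IsUnit (PB n A b) := by
  rw [PB_eq]
  exact (KMat_isUnit n A b hK).mul (MMat_isUnit n A)
end

section
/- Let A be an n×n real matrix (n ≥ 2) and b ∈ ℝⁿ satisfying the Kalman rank condition. Let P be the matrix with columns f_1, ..., f_n where f_n = b and f_k = (A^{n-k} + Σ_{j=1}^{n-k} a_j A^{n-k-j}) b for 1 ≤ k ≤ n-1, with a_j the characteristic polynomial coefficients of A. Then A P = P 𝔄 and P e_n = b, where 𝔄 is the companion matrix of the characteristic polynomial of A (with ones on the superdiagonal and last row (-a_n, ..., -a_1)) and e_n is the last standard basis vector. -/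
open Matrix Finset

lemma pk_top (n : ℕ) (A : Matrix (Fin n) (Fin n) ℝ) : pk n A n = 1 := by
  simp [pk]

lemma pk_zero (n : ℕ) (A : Matrix (Fin n) (Fin n) ℝ) : pk n A 0 = 0 := by
  have hCH := A.aeval_self_charpoly
  have hdeg : A.charpoly.natDegree = n := by simp [A.charpoly_natDegree_eq_dim]
  have hmon : A.charpoly.coeff n = 1 := by
    have := A.charpoly_monic.coeff_natDegree
    rwa [hdeg] at this
  rw [Polynomial.aeval_eq_sum_range, hdeg, Finset.sum_range_succ, hmon, one_smul] at hCH
  have hsum : ∑ j ∈ Finset.Icc 1 n, coeffa n A j • A ^ (n - j)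
      = ∑ i ∈ Finset.range n, A.charpoly.coeff i • A ^ i := by
    refine Finset.sum_nbij' (fun j => n - j) (fun i => n - i) ?_ ?_ ?_ ?_ ?_
    · intro a ha; simp only [Finset.mem_Icc] at ha; simp only [Finset.mem_range]; omega
    · intro a ha; simp only [Finset.mem_range] at ha; simp only [Finset.mem_Icc]; omega
    · intro a ha; simp only [Finset.mem_Icc] at ha; show n - (n - a) = a; omega
    · intro a ha; simp only [Finset.mem_range] at ha; show n - (n - a) = a; omega
    · intro a ha; simp [coeffa]
  rw [pk]
  simp only [Nat.sub_zero]
  rw [hsum, add_comm]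
  exact hCH

lemma pk_step (n : ℕ) (A : Matrix (Fin n) (Fin n) ℝ) (k : ℕ) (hk : k < n) :
    A * pk n A (k + 1) = pk n A k - coeffa n A (n - k) • 1 := by
  have hm : n - k = (n - (k + 1)) + 1 := by omega
  set m := n - (k + 1) with hm'
  rw [pk, pk, hm]
  rw [mul_add, Finset.mul_sum]
  have h1 : A * A ^ m = A ^ (m + 1) := (pow_succ' A m).symm
  have h2 : ∀ j ∈ Finset.Icc 1 m, A * (coeffa n A j • A ^ (m - j))
      = coeffa n A j • A ^ (m + 1 - j) := by
    intro j hj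
    simp only [Finset.mem_Icc] at hj
    rw [mul_smul_comm, (pow_succ' A (m - j)).symm]
    congr 2
    omega
  rw [Finset.sum_congr rfl h2, h1,
    Finset.sum_Icc_succ_top (by omega : 1 ≤ m + 1) (fun j => coeffa n A j • A ^ (m + 1 - j))]
  simp only [Nat.sub_self, pow_zero]
  abel

theorem brunovsky_similarity (n : ℕ) (hn : 2 ≤ n)
    (A : Matrix (Fin n) (Fin n) ℝ) (b : Fin n → ℝ) (hK : Kalman n A b) :
    A * PB n A b = PB n A b * companion n A ∧ (PB n A b).mulVec (elast n) = b :=  by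
  have hn1 : n - 1 < n := by omega
  set L : Fin n := ⟨n - 1, hn1⟩ with hLdef
  have hPcolL : ∀ r, PB n A b r L = b r := by
    intro r
    show ((pk n A ((n - 1) + 1)).mulVec b) r = b r
    have h : (n - 1) + 1 = n := by omega
    rw [h, pk_top, one_mulVec]
  constructor
  · ext r c
    have hcn := c.isLt
    rw [Matrix.mul_apply, Matrix.mul_apply]
    have hL1 : ∑ k, A r k * PB n A b k c = ((A * pk n A ((c : ℕ) + 1)).mulVec b) r := by
      rw [← Matrix.mulVec_mulVec]
      simp [Matrix.mulVec, dotProduct, PB]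
    rw [hL1, pk_step n A (c : ℕ) hcn, Matrix.sub_mulVec, Matrix.smul_mulVec,
      Matrix.one_mulVec]
    by_cases hc0 : (c : ℕ) = 0
    · have hsplit : ∀ k : Fin n, PB n A b r k * companion n A k c
          = if k = L then PB n A b r L * (-(coeffa n A (n - (c : ℕ)))) else 0 := by
        intro k
        by_cases hkL : k = L
        · subst hkL
          simp [companion, hLdef]
        · have hkL' : (k : ℕ) ≠ n - 1 := by
            simpa [hLdef, Fin.ext_iff] using hkL
          have hk2 : (c : ℕ) ≠ (k : ℕ) + 1 := by omega
          simp [companion, hkL, hkL', hk2]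
      rw [Finset.sum_congr rfl fun k _ => hsplit k, Finset.sum_ite_eq' Finset.univ L
        (fun k => PB n A b r L * (-(coeffa n A (n - (c : ℕ)))))]
      simp only [Finset.mem_univ, if_true, hPcolL, hc0, Nat.sub_zero, pk_zero,
        Matrix.zero_mulVec, Pi.zero_apply, Pi.sub_apply, Pi.smul_apply, smul_eq_mul]
      ring
    · set C : Fin n := ⟨(c : ℕ) - 1, by omega⟩ with hCdef
      have hCL : C ≠ L := by
        simp only [hCdef, hLdef, Ne, Fin.ext_iff]
        omega
      have hsplit : ∀ k : Fin n, PB n A b r k * companion n A k c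
          = (if k = L then PB n A b r L * (-(coeffa n A (n - (c : ℕ)))) else 0)
            + (if k = C then PB n A b r k else 0) := by
        intro k
        by_cases hkL : k = L
        · subst hkL
          simp [companion, hLdef, hCL.symm]
          exact fun h => absurd h.symm hCL
        · have hkL' : (k : ℕ) ≠ n - 1 := by
            simpa [hLdef, Fin.ext_iff] using hkL
          by_cases hkC : k = C
          · subst hkC
            have hk2 : (c : ℕ) = (C : ℕ) + 1 := by
              simp only [hCdef]
              omega
            simp only [companion, Matrix.of_apply, if_neg hkL', if_pos hk2, if_neg hCL,
              if_pos rfl, mul_one, zero_add, if_true]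
          · have hkC' : (c : ℕ) ≠ (k : ℕ) + 1 := by
              intro h
              apply hkC
              simp only [hCdef, Fin.ext_iff]
              omega
            simp only [companion, Matrix.of_apply, if_neg hkL', if_neg hkC', if_neg hkL,
              if_neg hkC, mul_zero, add_zero]
      rw [Finset.sum_congr rfl fun k _ => hsplit k, Finset.sum_add_distrib,
        Finset.sum_ite_eq' Finset.univ L
          (fun k => PB n A b r L * (-(coeffa n A (n - (c : ℕ))))),
        Finset.sum_ite_eq' Finset.univ C (fun k => PB n A b r k)]
      have hPC : PB n A b r C = (pk n A (c : ℕ)).mulVec b r := by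
        have hc1 : ((c : ℕ) - 1) + 1 = (c : ℕ) := by omega
        show ((pk n A (((c : ℕ) - 1) + 1)).mulVec b) r = _
        rw [hc1]
      simp only [Finset.mem_univ, if_true, hPcolL, hPC, Pi.sub_apply, Pi.smul_apply,
        smul_eq_mul]
      ring
  · funext r
    have h1 : (PB n A b).mulVec (elast n) r = ∑ c, PB n A b r c * elast n c := by
      simp [Matrix.mulVec, dotProduct]
    rw [h1]
    have h2 : ∀ c : Fin n, PB n A b r c * elast n c = if c = L then PB n A b r c else 0 := by
      intro c
      simp only [elast, hLdef, Fin.ext_iff, mul_ite, mul_one, mul_zero]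
    rw [Finset.sum_congr rfl fun c _ => h2 c,
      Finset.sum_ite_eq' Finset.univ L (fun c => PB n A b r c)]
    simp [hPcolL]
end

section
/- Let A ∈ M_{n×n}(ℝ) with polynomials p_k(A) defined from its characteristic coefficients (p_k(A) = A^{n-k} + Σ_{j=1}^{n-k} a_j A^{n-k-j} for k ≤ n-1, p_n(A) = I), and let P(b) be the matrix with columns p_k(A)b. Suppose R ∈ M_{n×n}(ℝ) is orthogonal (R Rᵀ = Rᵀ R = I) and commutes with A (AR = RA). Then for every b ∈ ℝⁿ, the smallest eigenvalue of P(Rb) P(Rb)ᵀ equals the smallest eigenvalue of P(b) P(b)ᵀ. -/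
open Matrix Finset

lemma pk_commute (n : ℕ) (A R : Matrix (Fin n) (Fin n) ℝ) (hcomm : A * R = R * A)
    (k : ℕ) : Commute (pk n A k) R := by
  have hc : Commute A R := hcomm
  unfold pk
  refine Commute.add_left (hc.pow_left _) ?_
  refine Commute.sum_left _ _ _ fun j _ => ?_
  exact (hc.pow_left _).smul_left _

lemma PB_mulVec (n : ℕ) (A R : Matrix (Fin n) (Fin n) ℝ) (b : Fin n → ℝ)
    (hcomm : A * R = R * A) : PB n A (R.mulVec b) = R * PB n A b := by
  ext r c
  have h : pk n A ((c : ℕ) + 1) * R = R * pk n A ((c : ℕ) + 1) :=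
    pk_commute n A R hcomm _
  have : (pk n A ((c : ℕ) + 1)).mulVec (R.mulVec b)
      = R.mulVec ((pk n A ((c : ℕ) + 1)).mulVec b) := by
    rw [mulVec_mulVec, mulVec_mulVec, h]
  show ((pk n A ((c : ℕ) + 1)).mulVec (R.mulVec b)) r = _
  rw [this]
  simp [Matrix.mul_apply, Matrix.mulVec, dotProduct, PB]

theorem lambda_min_invariant_under_commuting_orthogonal (n : ℕ) (hn : 0 < n)
    (A R : Matrix (Fin n) (Fin n) ℝ) (b : Fin n → ℝ)
    (hR1 : R * Rᵀ = 1) (hR2 : Rᵀ * R = 1) (hcomm : A * R = R * A)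
    (h1 : (PB n A (R.mulVec b) * (PB n A (R.mulVec b))ᵀ).IsHermitian)
    (h2 : (PB n A b * (PB n A b)ᵀ).IsHermitian) :
    (⨅ i, h1.eigenvalues i) = ⨅ i, h2.eigenvalues i := by
  have hPB := PB_mulVec n A R b hcomm
  set M := PB n A b * (PB n A b)ᵀ with hM
  have key : PB n A (R.mulVec b) * (PB n A (R.mulVec b))ᵀ = R * M * Rᵀ := by
    rw [hPB, Matrix.transpose_mul, hM]
    noncomm_ring
  have u : (Matrix (Fin n) (Fin n) ℝ)ˣ := ⟨R, Rᵀ, hR1, hR2⟩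
  have hspec : spectrum ℝ (PB n A (R.mulVec b) * (PB n A (R.mulVec b))ᵀ)
      = spectrum ℝ M := by
    rw [key]
    exact spectrum.units_conjugate (u := ⟨R, Rᵀ, hR1, hR2⟩)
  have hr : Set.range h1.eigenvalues = Set.range h2.eigenvalues := by
    rw [← Matrix.IsHermitian.spectrum_real_eq_range_eigenvalues h1,
      ← Matrix.IsHermitian.spectrum_real_eq_range_eigenvalues h2]
    exact hspec
  haveI : Nonempty (Fin n) := ⟨⟨0, hn⟩⟩
  rw [iInf, iInf, hr]
end

section
/- Let A ∈ M_{n×n}(ℝ) with characteristic polynomial coefficients a_j, and A_□ = [[0, I_n], [A, 0]]. Denote by a_j^□ the characteristic polynomial coefficients of A_□ and define p_k^□(A_□) = A_□^{2n-k} + Σ_{j=1}^{2n-k} a_j^□ A_□^{2n-k-j} for k ≤ 2n-1, p_{2n}^□ = I_{2n}, and similarly p_κ(A) for A. Then for even indices k = 2κ with 1 ≤ κ ≤ n: p_{2κ}^□(A_□) = [[p_κ(A), 0], [0, p_κ(A)]]. -/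
open Matrix Finset

/-- p_k(M) = M^(N-k) + Σ_{j=1}^{N-k} a_j M^(N-k-j), where a_j is the coefficient
of x^(N-j) in the characteristic polynomial of the N×N matrix M (p_N(M) = I). -/
noncomputable def pkG {m : Type} [Fintype m] [DecidableEq m] (N : ℕ)
    (M : Matrix m m ℝ) (k : ℕ) : Matrix m m ℝ :=
  M ^ (N - k) + ∑ j ∈ Finset.Icc 1 (N - k), M.charpoly.coeff (N - j) • M ^ (N - k - j)

open Polynomial in
lemma eval_charpoly_aux {m : Type*} [Fintype m] [DecidableEq m] (M : Matrix m m ℝ) (x : ℝ) :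
    M.charpoly.eval x = (x • (1 : Matrix m m ℝ) - M).det := by
  rw [Matrix.charpoly, _root_.eval_det, matPolyEquiv_charmatrix]
  congr 1
  simp only [eval_sub, eval_X, eval_C]
  congr 1
  ext i j
  simp [Matrix.scalar_apply, Matrix.smul_apply, Matrix.one_apply, Matrix.diagonal]

lemma det_block_aux (n : ℕ) (A : Matrix (Fin n) (Fin n) ℝ) (x : ℝ) (hx : x ≠ 0) :
    (x • (1 : Matrix (Fin n ⊕ Fin n) (Fin n ⊕ Fin n) ℝ)
        - Matrix.fromBlocks 0 1 A 0).det
      = ((x ^ 2) • (1 : Matrix (Fin n) (Fin n) ℝ) - A).det := by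
  have h1 : x • (1 : Matrix (Fin n ⊕ Fin n) (Fin n ⊕ Fin n) ℝ)
      = Matrix.fromBlocks (x • 1) (x • 0) (x • 0) (x • 1) := by
    rw [← Matrix.fromBlocks_smul, Matrix.fromBlocks_one]
  letI : Invertible (x • (1 : Matrix (Fin n) (Fin n) ℝ)) :=
    ⟨x⁻¹ • 1, by simp [smul_smul, inv_mul_cancel₀ hx, mul_inv_cancel₀ hx],
      by simp [smul_smul, inv_mul_cancel₀ hx, mul_inv_cancel₀ hx]⟩
  rw [h1]
  have h2 : Matrix.fromBlocks (x • (1 : Matrix (Fin n) (Fin n) ℝ)) (x • 0) (x • 0)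
          (x • (1 : Matrix (Fin n) (Fin n) ℝ))
        - Matrix.fromBlocks (0 : Matrix (Fin n) (Fin n) ℝ) (1 : Matrix (Fin n) (Fin n) ℝ) A
          (0 : Matrix (Fin n) (Fin n) ℝ)
      = Matrix.fromBlocks (x • 1) (-1) (-A) (x • 1) := by
    rw [sub_eq_add_neg, Matrix.fromBlocks_neg, Matrix.fromBlocks_add]
    simp
  rw [h2, Matrix.det_fromBlocks₂₂]
  have hinv : (⅟ (x • (1 : Matrix (Fin n) (Fin n) ℝ))) = x⁻¹ • 1 := rfl
  rw [hinv]
  have h3 : (-1 : Matrix (Fin n) (Fin n) ℝ) * (x⁻¹ • 1) * (-A) = x⁻¹ • A := by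
    simp [Matrix.smul_mul, Matrix.mul_smul]
  rw [h3]
  have h4 : (x • (1 : Matrix (Fin n) (Fin n) ℝ)).det = x ^ n := by
    rw [Matrix.det_smul]
    simp
  rw [h4]
  have h5 : (x ^ 2) • (1 : Matrix (Fin n) (Fin n) ℝ) - A
      = x • (x • (1 : Matrix (Fin n) (Fin n) ℝ) - x⁻¹ • A) := by
    rw [smul_sub, smul_smul, smul_smul, mul_inv_cancel₀ hx, one_smul, sq]
  rw [h5, Matrix.det_smul]
  simp

open Polynomial in
lemma charpoly_block (n : ℕ) (A : Matrix (Fin n) (Fin n) ℝ) :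
    (Matrix.fromBlocks 0 1 A 0 : Matrix (Fin n ⊕ Fin n) (Fin n ⊕ Fin n) ℝ).charpoly
      = A.charpoly.comp (X ^ 2) := by
  apply Polynomial.eq_of_infinite_eval_eq
  apply Set.Infinite.mono ?_ ((Set.finite_singleton (0 : ℝ)).infinite_compl)
  intro x hx
  have hx0 : x ≠ 0 := by simpa using hx
  show _ = _
  rw [eval_comp, eval_pow, eval_X, eval_charpoly_aux, eval_charpoly_aux,
    det_block_aux n A x hx0]

open Polynomial in
lemma coeff_comp_X_sq_even (p : ℝ[X]) (k : ℕ) :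
    (p.comp (X ^ 2 : ℝ[X])).coeff (2 * k) = p.coeff k := by
  rw [Polynomial.comp, eval₂_eq_sum, Polynomial.sum, finset_sum_coeff]
  simp only [coeff_C_mul, ← pow_mul, coeff_X_pow]
  have h : ∀ e ∈ p.support, p.coeff e * (if 2 * k = 2 * e then (1:ℝ) else 0)
      = if e = k then p.coeff e else 0 := by
    intro e _
    rcases eq_or_ne e k with rfl | h
    · simp
    · rw [if_neg (by omega), if_neg h, mul_zero]
  rw [Finset.sum_congr rfl h, Finset.sum_ite_eq' p.support k (fun e => p.coeff e)]
  by_cases hk : k ∈ p.support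
  · rw [if_pos hk]
  · rw [if_neg hk]
    exact (Polynomial.notMem_support_iff.mp hk).symm

open Polynomial in
lemma coeff_comp_X_sq_odd (p : ℝ[X]) (k : ℕ) (hk : ¬ 2 ∣ k) :
    (p.comp (X ^ 2 : ℝ[X])).coeff k = 0 := by
  rw [Polynomial.comp, eval₂_eq_sum, Polynomial.sum, finset_sum_coeff]
  simp only [coeff_C_mul, ← pow_mul, coeff_X_pow]
  apply Finset.sum_eq_zero
  intro e _
  rw [if_neg (by omega), mul_zero]

lemma block_pow (n m : ℕ) (A : Matrix (Fin n) (Fin n) ℝ) :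
    (Matrix.fromBlocks 0 1 A 0 : Matrix (Fin n ⊕ Fin n) (Fin n ⊕ Fin n) ℝ) ^ (2 * m)
      = Matrix.fromBlocks (A ^ m) 0 0 (A ^ m) := by
  induction m with
  | zero => simp [Matrix.fromBlocks_one]
  | succ m ih =>
    have h2 : 2 * (m + 1) = 2 * m + 1 + 1 := by omega
    rw [h2, pow_succ, pow_succ, ih, Matrix.fromBlocks_multiply, Matrix.fromBlocks_multiply]
    simp [pow_succ]

lemma sum_fromBlocks (n : ℕ) (s : Finset ℕ) (f : ℕ → ℝ) (g : ℕ → Matrix (Fin n) (Fin n) ℝ) :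
    ∑ i ∈ s, f i • Matrix.fromBlocks (g i) 0 0 (g i)
      = Matrix.fromBlocks (∑ i ∈ s, f i • g i) 0 0 (∑ i ∈ s, f i • g i) := by
  induction s using Finset.cons_induction with
  | empty => simp [← Matrix.fromBlocks_zero]
  | cons a s ha ih =>
    rw [Finset.sum_cons, Finset.sum_cons, ih, Matrix.fromBlocks_smul, Matrix.fromBlocks_add]
    simp

open Polynomial in
/-- For even indices k = 2κ, the Brunovsky polynomial of the block matrix
A_□ = [[0, I], [A, 0]] is block diagonal: p_{2κ}^□(A_□) = diag(p_κ(A), p_κ(A)). -/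
theorem pk_block_even (n : ℕ) (A : Matrix (Fin n) (Fin n) ℝ)
    (κ : ℕ) (h1 : 1 ≤ κ) (h2 : κ ≤ n) :
    pkG (2 * n) (Matrix.fromBlocks 0 1 A 0 : Matrix (Fin n ⊕ Fin n) (Fin n ⊕ Fin n) ℝ) (2 * κ)
      = Matrix.fromBlocks (pkG n A κ) 0 0 (pkG n A κ) := by
  unfold pkG
  have hm : 2 * n - 2 * κ = 2 * (n - κ) := by omega
  rw [hm, charpoly_block, block_pow]
  have hsum : ∑ j ∈ Finset.Icc 1 (2 * (n - κ)),
        (A.charpoly.comp (X ^ 2 : ℝ[X])).coeff (2 * n - j)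
          • (Matrix.fromBlocks 0 1 A 0 : Matrix (Fin n ⊕ Fin n) (Fin n ⊕ Fin n) ℝ)
              ^ (2 * (n - κ) - j)
      = ∑ i ∈ Finset.Icc 1 (n - κ), A.charpoly.coeff (n - i)
          • Matrix.fromBlocks (A ^ (n - κ - i)) 0 0 (A ^ (n - κ - i)) := by
    rw [← Finset.sum_filter_add_sum_filter_not (Finset.Icc 1 (2 * (n - κ))) (fun j => 2 ∣ j)]
    have hodd : ∑ j ∈ (Finset.Icc 1 (2 * (n - κ))).filter (fun j => ¬ 2 ∣ j),
        (A.charpoly.comp (X ^ 2 : ℝ[X])).coeff (2 * n - j)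
          • (Matrix.fromBlocks 0 1 A 0 : Matrix (Fin n ⊕ Fin n) (Fin n ⊕ Fin n) ℝ)
              ^ (2 * (n - κ) - j) = 0 := by
      apply Finset.sum_eq_zero
      intro j hj
      simp only [Finset.mem_filter, Finset.mem_Icc] at hj
      rw [coeff_comp_X_sq_odd _ _ (by omega), zero_smul]
    rw [hodd, add_zero]
    refine Finset.sum_bij' (i := fun j _ => j / 2) (j := fun i _ => 2 * i)
      (hi := ?_) (hj := ?_) (left_neg := ?_) (right_neg := ?_) (h := ?_)
    · intro j hj
      simp only [Finset.mem_filter, Finset.mem_Icc] at hj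
      simp only [Finset.mem_Icc]
      omega
    · intro i hi
      simp only [Finset.mem_Icc] at hi
      simp only [Finset.mem_filter, Finset.mem_Icc]
      omega
    · intro j hj
      simp only [Finset.mem_filter, Finset.mem_Icc] at hj
      omega
    · intro i hi
      simp only [Finset.mem_Icc] at hi
      omega
    · intro j hj
      simp only [Finset.mem_filter, Finset.mem_Icc] at hj
      have e1 : 2 * n - j = 2 * (n - j / 2) := by omega
      have e2 : 2 * (n - κ) - j = 2 * ((n - κ) - j / 2) := by omega
      rw [e1, e2, coeff_comp_X_sq_even, block_pow]
  rw [hsum, sum_fromBlocks, Matrix.fromBlocks_add]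
  simp
end
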